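/- Let H assign to each point of ℝ^q a subset of ℝ^q, and call ψ : [0,∞) → ℝ^q a solution of the differential inclusion ẋ ∈ H(x) if ψ is locally absolutely continuous and ψ'(t) ∈ H(ψ(t)) for almost every t ≥ 0. Let φ be a solution whose range is contained in a compact set, and let z ∈ ℝ^q. Assume: (Lyapunov stability) for every ε > 0 there exists δ > 0 such that every solution ψ with ‖ψ(0) − z‖ < δ satisfies ‖ψ(t) − z‖ < ε for all t ≥ 0; and (almost cluster point) for every ε > 0 the Lebesgue measure of {t ≥ 0 : ‖φ(t) − z‖ ≤ ε} is infinite. Then φ(t) → z as t → ∞. -/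
import Mathlib


open MeasureTheory Filter

noncomputable section

/-- Local absolute continuity on `[0, ∞)`: differentiable a.e. with locally
integrable derivative, and the fundamental theorem of calculus holds. -/
def LocAC {F : Type*} [NormedAddCommGroup F] [NormedSpace ℝ F] [CompleteSpace F]
    (φ : ℝ → F) : Prop :=
  (∀ᵐ t ∂(volume.restrict (Set.Ici (0:ℝ))), DifferentiableAt ℝ φ t) ∧
  LocallyIntegrableOn (deriv φ) (Set.Ici 0) volume ∧
  ∀ s t : ℝ, 0 ≤ s → s ≤ t → φ t - φ s = ∫ τ in s..t, deriv φ τ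

/-- `ψ` is a solution of the differential inclusion `ẋ ∈ H(x)` on `[0, ∞)`. -/
def IsSolOf {q : ℕ} (H : EuclideanSpace ℝ (Fin q) → Set (EuclideanSpace ℝ (Fin q)))
    (ψ : ℝ → EuclideanSpace ℝ (Fin q)) : Prop :=
  LocAC ψ ∧ ∀ᵐ t ∂(volume.restrict (Set.Ici (0:ℝ))), deriv ψ t ∈ H (ψ t)

/-- Shift an a.e. property on `[0,∞)` by `c ≥ 0`. -/
lemma ae_shift {P : ℝ → Prop} (c : ℝ) (hc : 0 ≤ c)
    (h : ∀ᵐ t ∂(volume.restrict (Set.Ici (0:ℝ))), P t) :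
    ∀ᵐ t ∂(volume.restrict (Set.Ici (0:ℝ))), P (t + c) := by
  rw [ae_restrict_iff' measurableSet_Ici] at h ⊢
  have h2 : ∀ᵐ t ∂(volume : Measure ℝ), t + c ∈ Set.Ici (0:ℝ) → P (t + c) :=
    (measurePreserving_add_right volume c).quasiMeasurePreserving.ae h
  filter_upwards [h2] with t ht h0
  exact ht (by simp only [Set.mem_Ici] at *; linarith)

/-- Time-shifting a solution of the differential inclusion gives a solution. -/
lemma isSolOf_shift {q : ℕ} {H : EuclideanSpace ℝ (Fin q) → Set (EuclideanSpace ℝ (Fin q))}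
    {φ : ℝ → EuclideanSpace ℝ (Fin q)} (hφ : IsSolOf H φ) (c : ℝ) (hc : 0 ≤ c) :
    IsSolOf H (fun t => φ (t + c)) := by
  obtain ⟨⟨hdiff, hloc, hftc⟩, hincl⟩ := hφ
  have hderiv : ∀ t : ℝ, deriv (fun s => φ (s + c)) t = deriv φ (t + c) := fun t =>
    deriv_comp_add_const φ c t
  refine ⟨⟨?_, ?_, ?_⟩, ?_⟩
  · filter_upwards [ae_shift c hc hdiff] with t ht
    exact ht.comp t ((differentiable_id.add_const c) t)
  · rw [MeasureTheory.locallyIntegrableOn_iff isClosed_Ici.isLocallyClosed] at hloc ⊢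
    intro K hK hKc
    obtain ⟨b, hb⟩ := hKc.bddAbove
    have hKsub : K ⊆ Set.Icc 0 (max b 0) := fun x hx => ⟨hK hx, le_max_of_le_left (hb hx)⟩
    have h1 : IntegrableOn (deriv φ) (Set.Icc c (max b 0 + c)) volume :=
      hloc _ (fun x hx => le_trans hc hx.1) isCompact_Icc
    have h2 : IntervalIntegrable (deriv φ) volume c (max b 0 + c) :=
      (intervalIntegrable_iff_integrableOn_Icc_of_le (by linarith [le_max_right b (0:ℝ)])).2 h1
    have h3 := h2.comp_add_right c
    simp only [sub_self, add_sub_cancel_right] at h3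
    have h4 : IntegrableOn (fun x => deriv φ (x + c)) (Set.Icc 0 (max b 0)) volume :=
      (intervalIntegrable_iff_integrableOn_Icc_of_le (le_max_right _ _)).1 h3
    have h5 : IntegrableOn (deriv fun s => φ (s + c)) (Set.Icc 0 (max b 0)) volume := by
      simpa only [funext hderiv] using h4
    exact h5.mono_set hKsub
  · intro s t hs hst
    have := hftc (s + c) (t + c) (by linarith) (by linarith)
    rw [← intervalIntegral.integral_comp_add_right] at this
    simpa only [funext hderiv] using this
  · filter_upwards [ae_shift c hc hincl] with t ht
    simpa only [hderiv] using ht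

/-- a Lyapunov stable equilibrium that is an almost cluster point of a
precompact solution is its limit. -/
theorem stmt3
    (q : ℕ) (H : EuclideanSpace ℝ (Fin q) → Set (EuclideanSpace ℝ (Fin q)))
    (φ : ℝ → EuclideanSpace ℝ (Fin q)) (hφ : IsSolOf H φ)
    (D : Set (EuclideanSpace ℝ (Fin q))) (hD : IsCompact D)
    (hrange : ∀ t : ℝ, 0 ≤ t → φ t ∈ D)
    (z : EuclideanSpace ℝ (Fin q))
    (hstab : ∀ ε : ℝ, 0 < ε → ∃ δ : ℝ, 0 < δ ∧
      ∀ ψ : ℝ → EuclideanSpace ℝ (Fin q), IsSolOf H ψ → ‖ψ 0 - z‖ < δ →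
        ∀ t : ℝ, 0 ≤ t → ‖ψ t - z‖ < ε)
    (hclus : ∀ ε : ℝ, 0 < ε → volume {t : ℝ | 0 ≤ t ∧ ‖φ t - z‖ ≤ ε} = ⊤) :
    Filter.Tendsto φ Filter.atTop (nhds z) := by
  rw [Metric.tendsto_atTop]
  intro ε hε
  obtain ⟨δ, hδ, hδstab⟩ := hstab ε hε
  have hunb : ∃ t₀ : ℝ, 0 ≤ t₀ ∧ ‖φ t₀ - z‖ ≤ δ / 2 := by
    by_contra hcon
    push_neg at hcon
    have hempty : {t : ℝ | 0 ≤ t ∧ ‖φ t - z‖ ≤ δ / 2} = ∅ := by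
      ext t
      simp only [Set.mem_setOf_eq, Set.mem_empty_iff_false, iff_false, not_and, not_le]
      exact hcon t
    have h := hclus (δ / 2) (by positivity)
    rw [hempty, measure_empty] at h
    exact (by simp : (0:ENNReal) ≠ ⊤) h
  obtain ⟨t₀, ht₀, hclose⟩ := hunb
  refine ⟨t₀, fun t ht => ?_⟩
  have hsol := isSolOf_shift hφ t₀ ht₀
  have key := hδstab _ hsol (by simpa using lt_of_le_of_lt hclose (by linarith))
    (t - t₀) (by linarith)
  rw [dist_eq_norm]
  simpa [sub_add_cancel] using key

end
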